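/- Fix an integer l ≥ 1 and let S = ℤ/2lℤ with the character χ([m]) = ω^m, where ω = e^{πi/l}. Let a_{r,m} = ω^{rm}·Q^r·P^m ∈ M_l(ℂ) as usual. Then the linear map θ_A : Â_S → M_l(ℂ[t,t⁻¹]) determined by θ_A(c) = 0 and θ_A(A_{[r],m}) = t^m·a_{r,m} for r, m ∈ ℤ is well defined (since a_{r+2l,m} = a_{r,m}) and is a homomorphism of complex Lie algebras, where M_l(ℂ[t,t⁻¹]) carries the commutator bracket. Its range equals span_ℂ{ t^m·a_{r,m} : r, m ∈ ℤ }, and its kernel equals span_ℂ( {c} ∪ { A_{[r+l],m} − (−1)^m·A_{[r],m} : r, m ∈ ℤ } ). -/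

import Mathlib

open scoped Classical
open Complex Matrix LaurentPolynomial

/-! The trigonometric Lie algebra `Â_S`. -/

/-- The underlying vector space `ℂ ⊕ ((S × ℤ) →₀ ℂ)` of `Â_S`. -/
abbrev TrigA (S : Type*) := ℂ × ((S × ℤ) →₀ ℂ)

/-- The central basis element `c`. -/
noncomputable def Acen (S : Type*) : TrigA S := (1, 0)

/-- The basis element `A_{α,m}`. -/
noncomputable def Agen {S : Type*} (α : S) (m : ℤ) : TrigA S := (0, Finsupp.single (α, m) 1)

/-- The value of the bracket of `Â_S` on basis elements. -/
noncomputable def AbrkBasis {S : Type*} [AddCommGroup S] (χ : S → ℂˣ) (p q : S × ℤ) :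
    TrigA S :=
  ((if p.1 + q.1 = 0 ∧ p.2 + q.2 = 0 then (p.2 : ℂ) else 0),
    Finsupp.single (p.1 + q.1, p.2 + q.2)
      (((χ (p.2 • q.1 - q.2 • p.1) : ℂˣ) : ℂ) - ((χ (q.2 • p.1 - p.2 • q.1) : ℂˣ) : ℂ)))

/-- The Lie bracket of `Â_S`. -/
noncomputable def Abrk {S : Type*} [AddCommGroup S] (χ : S → ℂˣ) (x y : TrigA S) : TrigA S :=
  x.2.sum fun p a => y.2.sum fun q b => (a * b) • AbrkBasis χ p q

/-! The matrices `a_{r,m}`. -/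

/-- The `l×l` complex matrix algebra, with rows and columns indexed cyclically. -/
abbrev MatL (l : ℕ) := Matrix (ZMod l) (ZMod l) ℂ

/-- `ζ = e^{2πi/l}`. -/
noncomputable def zetaL (l : ℕ) : ℂ := Complex.exp (2 * Real.pi * Complex.I / l)

/-- `ω = e^{πi/l}`. -/
noncomputable def omegaL (l : ℕ) : ℂ := Complex.exp (Real.pi * Complex.I / l)

/-- The cyclic permutation matrix `P` (with `P_{i,i+1} = 1` cyclically). -/
noncomputable def Pmat (l : ℕ) : MatL l :=
  Matrix.of fun i j => if j = i + 1 then (1 : ℂ) else 0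

/-- The diagonal matrix `Q = diag(ζ, ζ², …, ζ^l)`. -/
noncomputable def Qmat (l : ℕ) : MatL l :=
  Matrix.of fun i j => if i = j then zetaL l ^ (i.val + 1) else 0

/-- The matrices `a_{r,m} = ω^{rm} · Q^r · P^m` for `r, m ∈ ℤ`. -/
noncomputable def amat (l : ℕ) [NeZero l] (r m : ℤ) : MatL l :=
  omegaL l ^ (r * m) • (Qmat l ^ r * Pmat l ^ m)

/-- The character `χ : ℤ/2lℤ → ℂˣ`, `χ([m]) = ω^m`. -/
noncomputable def chiTwoL (l : ℕ) : ZMod (2 * l) → ℂˣ := fun x =>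
  Units.mk0 (omegaL l ^ x.val) (pow_ne_zero _ (Complex.exp_ne_zero _))

/-- `t^m · a_{r,m}`, an element of `M_l(ℂ[t,t⁻¹])`. -/
noncomputable def laurentGen (l : ℕ) [NeZero l] (r m : ℤ) :
    Matrix (ZMod l) (ZMod l) (LaurentPolynomial ℂ) :=
  (LaurentPolynomial.T m : LaurentPolynomial ℂ) • (amat l r m).map (algebraMap ℂ (LaurentPolynomial ℂ))

/-- The linear map `θ_A : Â_S → M_l(ℂ[t,t⁻¹])`, with `θ_A(c) = 0` and
`θ_A(A_{[r],m}) = t^m · a_{r,m}` (well defined since `a_{r+2l,m} = a_{r,m}`). -/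
noncomputable def thetaA (l : ℕ) [NeZero l] (x : TrigA (ZMod (2 * l))) :
    Matrix (ZMod l) (ZMod l) (LaurentPolynomial ℂ) :=
  x.2.sum fun pm c => c • laurentGen l (pm.1.val : ℤ) pm.2

set_option linter.unusedSectionVars false
set_option maxHeartbeats 1000000

section Lemmas
variable (l : ℕ) [NeZero l]

lemma omegaL_ne_zero : omegaL l ≠ 0 := Complex.exp_ne_zero _
lemma zetaL_ne_zero : zetaL l ≠ 0 := Complex.exp_ne_zero _

lemma zetaL_eq : zetaL l = omegaL l ^ (2:ℕ) := by
  rw [omegaL, zetaL, ← Complex.exp_nat_mul]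
  ring_nf

lemma omegaL_pow_l : omegaL l ^ l = -1 := by
  rw [omegaL, ← Complex.exp_nat_mul]
  have hl : (l:ℂ) ≠ 0 := Nat.cast_ne_zero.mpr (NeZero.ne l)
  rw [mul_div_assoc', mul_comm, mul_div_assoc, div_self hl, mul_one, Complex.exp_pi_mul_I]

lemma zetaL_pow_l : zetaL l ^ l = 1 := by
  rw [zetaL_eq, ← pow_mul, mul_comm 2 l, pow_mul, omegaL_pow_l]
  norm_num

lemma omegaL_pow_two_l : omegaL l ^ (2 * l) = 1 := by
  rw [mul_comm 2 l, pow_mul, omegaL_pow_l]; norm_num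

lemma isPrimitiveRoot_zetaL : IsPrimitiveRoot (zetaL l) l := by
  simpa [zetaL] using Complex.isPrimitiveRoot_exp l (NeZero.ne l)

end Lemmas

lemma zpow_congr_mod {x : ℂ} (hx : x ≠ 0) {n : ℕ} (h1 : x ^ n = 1) {a b : ℤ}
    (h : (n:ℤ) ∣ a - b) : x ^ a = x ^ b := by
  obtain ⟨k, hk⟩ := h
  have ha : a = b + n * k := by linarith
  rw [ha, zpow_add₀ hx, _root_.zpow_mul, zpow_natCast, h1, _root_.one_zpow, mul_one]

lemma pow_congr_mod {x : ℂ} {n : ℕ} (h1 : x ^ n = 1) {a b : ℕ}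
    (h : a % n = b % n) : x ^ a = x ^ b := by
  conv_lhs => rw [← Nat.div_add_mod a n]
  conv_rhs => rw [← Nat.div_add_mod b n]
  rw [pow_add, pow_add, pow_mul, pow_mul, h1, one_pow, one_pow, h]

section MatLemmas
variable (l : ℕ) [NeZero l]

lemma Qmat_diagonal : Qmat l = Matrix.diagonal fun i => zetaL l ^ (i.val + 1) := by
  ext i j
  by_cases h : i = j <;> simp [Qmat, Matrix.diagonal, h]

lemma Pmat_pow (m : ℕ) :
    Pmat l ^ m = Matrix.of fun i j => if j = i + (m : ZMod l) then (1:ℂ) else 0 := by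
  induction m with
  | zero =>
    ext i j
    simp only [pow_zero, Matrix.one_apply, Matrix.of_apply]
    norm_num [eq_comm]
  | succ m ih =>
    ext i j
    rw [pow_succ, ih]
    simp only [Matrix.mul_apply, Matrix.of_apply, Pmat]
    rw [Finset.sum_eq_single (i + (m : ZMod l))]
    · push_cast
      by_cases h : j = i + m + 1 <;> simp [h, add_assoc]
    · intro b _ hb
      simp [hb]
    · simp

lemma Qmat_pow (m : ℕ) :
    Qmat l ^ m = Matrix.diagonal fun i => zetaL l ^ (m * (i.val + 1)) := by
  rw [Qmat_diagonal, Matrix.diagonal_pow]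
  have : ((fun i : ZMod l => zetaL l ^ (i.val + 1)) ^ m) = fun i => zetaL l ^ (m * (i.val + 1)) := by
    funext i
    rw [Pi.pow_apply, ← pow_mul, mul_comm]
  rw [this]

lemma Pmat_pow_l : Pmat l ^ l = 1 := by
  rw [Pmat_pow]
  ext i j
  simp [ZMod.natCast_self, Matrix.one_apply, eq_comm]

lemma Qmat_pow_l : Qmat l ^ l = 1 := by
  rw [Qmat_pow]
  ext i j
  simp [Matrix.diagonal, Matrix.one_apply, pow_mul, zetaL_pow_l]

end MatLemmas
section ZPowLemmas
variable (l : ℕ) [NeZero l]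

lemma isUnit_det_of_pow_eq_one {M : MatL l} {n : ℕ} (hn : n ≠ 0) (h : M ^ n = 1) :
    IsUnit M.det := by
  have h1 : M * M ^ (n - 1) = 1 := by
    rw [← pow_succ', Nat.sub_add_cancel (Nat.one_le_iff_ne_zero.mpr hn)]
    exact h
  exact Matrix.isUnit_det_of_right_inverse h1

lemma isUnit_Pmat_det : IsUnit (Pmat l).det :=
  isUnit_det_of_pow_eq_one l (NeZero.ne l) (Pmat_pow_l l)

lemma isUnit_Qmat_det : IsUnit (Qmat l).det :=
  isUnit_det_of_pow_eq_one l (NeZero.ne l) (Qmat_pow_l l)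

lemma Mzpow_congr {M : MatL l} (h : M ^ l = 1) {a b : ℤ} (hd : (l:ℤ) ∣ a - b) :
    M ^ a = M ^ b := by
  have hu : IsUnit M.det := isUnit_det_of_pow_eq_one l (NeZero.ne l) h
  obtain ⟨k, hk⟩ := hd
  have ha : a = b + l * k := by linarith
  rw [ha, Matrix.zpow_add hu, Matrix.zpow_mul _ hu, zpow_natCast, h, Matrix.one_zpow,
    Matrix.mul_one]

lemma Mzpow_toNat {M : MatL l} (h : M ^ l = 1) (m : ℤ) :
    M ^ m = M ^ ((m % l).toNat) := by
  have h0 : (0:ℤ) ≤ m % l := Int.emod_nonneg m (by exact_mod_cast NeZero.ne l)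
  rw [← zpow_natCast M ((m % l).toNat)]
  apply Mzpow_congr l h
  refine ⟨m / l, ?_⟩
  rw [Int.toNat_of_nonneg h0]
  have := Int.mul_ediv_add_emod m l
  linarith

lemma intCast_toNat_emod (n : ℕ) [NeZero n] (m : ℤ) :
    (((m % n).toNat : ℕ) : ZMod n) = ((m : ℤ) : ZMod n) := by
  have h0 : (0:ℤ) ≤ m % n := Int.emod_nonneg m (by exact_mod_cast NeZero.ne n)
  rw [← Int.cast_natCast, Int.toNat_of_nonneg h0, ZMod.intCast_eq_intCast_iff]
  show (m % n) % n = m % n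
  simp [Int.emod_emod_of_dvd]

lemma Pmat_zpow (m : ℤ) :
    Pmat l ^ m = Matrix.of fun i j => if j = i + (m : ZMod l) then (1:ℂ) else 0 := by
  rw [Mzpow_toNat l (Pmat_pow_l l), Pmat_pow]
  have : (((m % l).toNat : ℕ) : ZMod l) = ((m : ℤ) : ZMod l) := intCast_toNat_emod l m
  rw [this]

lemma val_add_int_congr (i : ZMod l) (m : ℤ) :
    (l:ℤ) ∣ (((i + (m : ZMod l)).val : ℤ) - ((i.val : ℤ) + m)) := by
  rw [← ZMod.intCast_zmod_eq_zero_iff_dvd]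
  push_cast [ZMod.natCast_val, ZMod.cast_id]
  ring

lemma Qmat_zpow (r : ℤ) :
    Qmat l ^ r = Matrix.diagonal fun i => zetaL l ^ (r * ((i.val : ℤ) + 1)) := by
  rw [Mzpow_toNat l (Qmat_pow_l l), Qmat_pow]
  have he : (fun i : ZMod l => zetaL l ^ ((r % l).toNat * (i.val + 1)))
      = fun i : ZMod l => zetaL l ^ (r * ((i.val : ℤ) + 1)) := by
    funext i
    rw [← zpow_natCast (zetaL l)]
    apply zpow_congr_mod (zetaL_ne_zero l) (zetaL_pow_l l)
    have h0 : (0:ℤ) ≤ r % l := Int.emod_nonneg r (by exact_mod_cast NeZero.ne l)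
    have hd : (l:ℤ) ∣ (r % l - r) := by
      refine ⟨-(r / l), ?_⟩
      have := Int.mul_ediv_add_emod r l
      linarith
    have : (((r % l).toNat * (i.val + 1) : ℕ) : ℤ) - r * ((i.val:ℤ) + 1)
        = (r % l - r) * ((i.val:ℤ) + 1) := by
      push_cast [Int.toNat_of_nonneg h0]
      ring
    rw [this]
    exact hd.mul_right _
  rw [he]
end ZPowLemmas
section AmatLemmas
variable (l : ℕ) [NeZero l]

lemma PQ_swap (m s : ℤ) :
    Pmat l ^ m * Qmat l ^ s = zetaL l ^ (m * s) • (Qmat l ^ s * Pmat l ^ m) := by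
  rw [Pmat_zpow, Qmat_zpow]
  ext i j
  rw [Matrix.mul_diagonal, Matrix.smul_apply, Matrix.diagonal_mul]
  by_cases h : j = i + (m : ZMod l)
  · subst h
    simp only [Matrix.of_apply, if_pos rfl, if_true, one_mul, mul_one, smul_eq_mul]
    rw [← zpow_add₀ (zetaL_ne_zero l)]
    apply zpow_congr_mod (zetaL_ne_zero l) (zetaL_pow_l l)
    have hd := val_add_int_congr l i m
    have heq : s * (((i + (m:ZMod l)).val : ℤ) + 1) - (m * s + s * ((i.val:ℤ) + 1))
        = s * ((((i + (m:ZMod l)).val : ℤ)) - ((i.val:ℤ) + m)) := by ring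
    rw [heq]
    exact hd.mul_left s
  · simp [h]

lemma amat_mul (r m s n : ℤ) :
    amat l r m * amat l s n = omegaL l ^ (m * s - n * r) • amat l (r + s) (m + n) := by
  have huQ : IsUnit (Qmat l).det := isUnit_Qmat_det l
  have huP : IsUnit (Pmat l).det := isUnit_Pmat_det l
  unfold amat
  rw [smul_mul_smul_comm]
  have key : (Qmat l ^ r * Pmat l ^ m) * (Qmat l ^ s * Pmat l ^ n)
      = zetaL l ^ (m*s) • (Qmat l ^ (r+s) * Pmat l ^ (m+n)) := by
    calc (Qmat l ^ r * Pmat l ^ m) * (Qmat l ^ s * Pmat l ^ n)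
        = Qmat l ^ r * (Pmat l ^ m * Qmat l ^ s) * Pmat l ^ n := by
          rw [Matrix.mul_assoc, Matrix.mul_assoc, Matrix.mul_assoc]
      _ = zetaL l ^ (m*s) • (Qmat l ^ r * (Qmat l ^ s * (Pmat l ^ m * Pmat l ^ n))) := by
          rw [PQ_swap]
          rw [Matrix.mul_smul, Matrix.smul_mul]
          congr 1
          rw [Matrix.mul_assoc, Matrix.mul_assoc]
      _ = zetaL l ^ (m*s) • (Qmat l ^ (r+s) * Pmat l ^ (m+n)) := by
          rw [← Matrix.mul_assoc, ← Matrix.zpow_add huQ, ← Matrix.zpow_add huP]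
  rw [key, smul_smul, smul_smul]
  congr 1
  have hsc : omegaL l ^ (r*m) * omegaL l ^ (s*n) * zetaL l ^ (m*s)
      = omegaL l ^ (r*m + s*n + 2*(m*s)) := by
    rw [zetaL_eq, ← zpow_natCast (omegaL l) 2, ← _root_.zpow_mul,
      ← zpow_add₀ (omegaL_ne_zero l), ← zpow_add₀ (omegaL_ne_zero l)]
    norm_num
  rw [hsc, ← zpow_add₀ (omegaL_ne_zero l)]
  congr 1
  ring

lemma amat_congr {r r' : ℤ} (h : ((2 * l : ℕ) : ℤ) ∣ r - r') (m : ℤ) :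
    amat l r m = amat l r' m := by
  unfold amat
  have hQ : Qmat l ^ r = Qmat l ^ r' := by
    apply Mzpow_congr l (Qmat_pow_l l)
    refine dvd_trans ?_ h
    exact_mod_cast (dvd_mul_left l 2)
  rw [hQ]
  congr 1
  apply zpow_congr_mod (omegaL_ne_zero l) (omegaL_pow_two_l l)
  have : r * m - r' * m = (r - r') * m := by ring
  rw [this]
  exact h.mul_right m

lemma amat_add_l (r m : ℤ) : amat l (r + l) m = ((-1:ℂ) ^ m) • amat l r m := by
  have huQ : IsUnit (Qmat l).det := isUnit_Qmat_det l
  unfold amat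
  rw [Matrix.zpow_add huQ, zpow_natCast, Qmat_pow_l, Matrix.mul_one, smul_smul]
  congr 1
  have : (r + l) * m = l * m + r * m := by ring
  rw [this, zpow_add₀ (omegaL_ne_zero l), _root_.zpow_mul, zpow_natCast, omegaL_pow_l]

lemma amat_apply (r m : ℤ) (i j : ZMod l) :
    amat l r m i j = if j = i + (m : ZMod l)
      then omegaL l ^ (r * m) * zetaL l ^ (r * ((i.val:ℤ) + 1)) else 0 := by
  unfold amat
  rw [Qmat_zpow, Pmat_zpow, Matrix.smul_apply, Matrix.diagonal_mul, Matrix.of_apply]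
  by_cases h : j = i + (m : ZMod l) <;> simp [h]

end AmatLemmas
instance neZeroTwoMul (l : ℕ) [NeZero l] : NeZero (2 * l) :=
  ⟨by have := NeZero.ne l; omega⟩

section LaurentLemmas
variable (l : ℕ) [NeZero l]

lemma map_complex_smul (c : ℂ) (M : MatL l) :
    (c • M).map (algebraMap ℂ (LaurentPolynomial ℂ))
      = c • M.map (algebraMap ℂ (LaurentPolynomial ℂ)) := by
  refine Matrix.ext fun i j => ?_
  rw [Matrix.map_apply, Matrix.smul_apply, Matrix.smul_apply, Matrix.map_apply, smul_eq_mul,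
    _root_.map_mul, ← Algebra.smul_def]

lemma laurentGen_mul (r m s n : ℤ) :
    laurentGen l r m * laurentGen l s n
      = omegaL l ^ (m * s - n * r) • laurentGen l (r + s) (m + n) := by
  unfold laurentGen
  rw [smul_mul_smul_comm, ← Matrix.map_mul, amat_mul, map_complex_smul, ← LaurentPolynomial.T_add]
  exact smul_comm _ _ _

lemma laurentGen_congr {r r' : ℤ} (h : ((2 * l : ℕ) : ℤ) ∣ r - r') (m : ℤ) :
    laurentGen l r m = laurentGen l r' m := by
  unfold laurentGen
  rw [amat_congr l h]

lemma laurentGen_add_l (r m : ℤ) :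
    laurentGen l (r + l) m = ((-1:ℂ) ^ m) • laurentGen l r m := by
  unfold laurentGen
  rw [amat_add_l, map_complex_smul]
  exact smul_comm _ _ _

noncomputable def vGen : (ZMod (2 * l) × ℤ) → Matrix (ZMod l) (ZMod l) (LaurentPolynomial ℂ) :=
  fun p => laurentGen l (p.1.val : ℤ) p.2

lemma thetaA_eq (x : TrigA (ZMod (2 * l))) :
    thetaA l x = Finsupp.linearCombination ℂ (vGen l) x.2 := by
  rw [Finsupp.linearCombination_apply]
  rfl

lemma int_dvd_of_cast_eq {n : ℕ} [NeZero n] {a b : ℤ} (h : (a : ZMod n) = (b : ZMod n)) :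
    ((n : ℕ) : ℤ) ∣ a - b := by
  rw [← ZMod.intCast_zmod_eq_zero_iff_dvd]
  push_cast
  rw [h]
  ring

lemma vGen_cast (r m : ℤ) : vGen l ((r : ZMod (2 * l)), m) = laurentGen l r m := by
  apply laurentGen_congr
  apply int_dvd_of_cast_eq
  push_cast [ZMod.natCast_val, ZMod.cast_id]
  rfl

lemma thetaA_Agen (r m : ℤ) : thetaA l (Agen ((r : ZMod (2 * l))) m) = laurentGen l r m := by
  rw [thetaA_eq, Agen, Finsupp.linearCombination_single, one_smul, vGen_cast]

end LaurentLemmas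
section Theta
variable (l : ℕ) [NeZero l]

lemma chi_eq {x : ZMod (2 * l)} {a : ℤ} (h : (a : ZMod (2 * l)) = x) :
    ((chiTwoL l x : ℂˣ) : ℂ) = omegaL l ^ a := by
  have h0 : ((chiTwoL l x : ℂˣ) : ℂ) = omegaL l ^ x.val := rfl
  rw [h0, ← zpow_natCast (omegaL l) x.val]
  apply zpow_congr_mod (omegaL_ne_zero l) (omegaL_pow_two_l l)
  apply int_dvd_of_cast_eq
  push_cast [ZMod.natCast_val, ZMod.cast_id]
  rw [h]

lemma theta_brk_basis (p q : ZMod (2 * l) × ℤ) :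
    Finsupp.linearCombination ℂ (vGen l) ((AbrkBasis (chiTwoL l) p q).2)
      = vGen l p * vGen l q - vGen l q * vGen l p := by
  have hsnd : (AbrkBasis (chiTwoL l) p q).2
      = Finsupp.single (p.1 + q.1, p.2 + q.2)
          (((chiTwoL l (p.2 • q.1 - q.2 • p.1) : ℂˣ) : ℂ)
            - ((chiTwoL l (q.2 • p.1 - p.2 • q.1) : ℂˣ) : ℂ)) := rfl
  rw [hsnd, Finsupp.linearCombination_single]
  have hv : vGen l (p.1 + q.1, p.2 + q.2)
      = laurentGen l (((p.1.val : ℤ)) + ((q.1.val : ℤ))) (p.2 + q.2) := by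
    have := vGen_cast l (((p.1.val : ℤ)) + ((q.1.val : ℤ))) (p.2 + q.2)
    rw [← this]
    congr 1
    push_cast [ZMod.natCast_val, ZMod.cast_id]
    rfl
  have hpq : vGen l p * vGen l q
      = omegaL l ^ (p.2 * (q.1.val : ℤ) - q.2 * (p.1.val : ℤ)) • vGen l (p.1 + q.1, p.2 + q.2) := by
    show laurentGen l _ _ * laurentGen l _ _ = _
    rw [laurentGen_mul, hv]
  have hqp : vGen l q * vGen l p
      = omegaL l ^ (q.2 * (p.1.val : ℤ) - p.2 * (q.1.val : ℤ)) • vGen l (p.1 + q.1, p.2 + q.2) := by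
    show laurentGen l _ _ * laurentGen l _ _ = _
    rw [laurentGen_mul, hv]
    rw [show (q.1.val : ℤ) + (p.1.val : ℤ) = (p.1.val : ℤ) + (q.1.val : ℤ) by ring,
      show q.2 + p.2 = p.2 + q.2 by ring]
  rw [hpq, hqp, ← sub_smul]
  congr 1
  rw [chi_eq l (x := p.2 • q.1 - q.2 • p.1) (a := p.2 * (q.1.val : ℤ) - q.2 * (p.1.val : ℤ)),
    chi_eq l (x := q.2 • p.1 - p.2 • q.1) (a := q.2 * (p.1.val : ℤ) - p.2 * (q.1.val : ℤ))]
  · push_cast [ZMod.natCast_val, ZMod.cast_id]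
    rw [zsmul_eq_mul, zsmul_eq_mul]
  · push_cast [ZMod.natCast_val, ZMod.cast_id]
    rw [zsmul_eq_mul, zsmul_eq_mul]

lemma theta_hom (x y : TrigA (ZMod (2 * l))) :
    thetaA l (Abrk (chiTwoL l) x y) = thetaA l x * thetaA l y - thetaA l y * thetaA l x := by
  rw [thetaA_eq, thetaA_eq, thetaA_eq]
  have hL : Finsupp.linearCombination ℂ (vGen l) (Abrk (chiTwoL l) x y).2
      = ∑ p ∈ x.2.support, ∑ q ∈ y.2.support,
          (x.2 p * y.2 q) • (vGen l p * vGen l q - vGen l q * vGen l p) := by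
    rw [Abrk, Finsupp.sum, Prod.snd_sum, map_sum]
    refine Finset.sum_congr rfl fun p _ => ?_
    rw [Finsupp.sum, Prod.snd_sum, map_sum]
    refine Finset.sum_congr rfl fun q _ => ?_
    rw [Prod.smul_snd, _root_.map_smul, theta_brk_basis]
  rw [hL, Finsupp.linearCombination_apply, Finsupp.linearCombination_apply, Finsupp.sum,
    Finsupp.sum, Finset.sum_mul_sum, Finset.sum_mul_sum,
    Finset.sum_comm (s := y.2.support) (t := x.2.support), ← Finset.sum_sub_distrib]
  refine Finset.sum_congr rfl fun p _ => ?_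
  rw [← Finset.sum_sub_distrib]
  refine Finset.sum_congr rfl fun q _ => ?_
  rw [smul_sub, smul_mul_smul_comm, smul_mul_smul_comm, mul_comm (y.2 q) (x.2 p)]

lemma theta_range :
    Set.range (thetaA l) =
      (Submodule.span ℂ {Y : Matrix (ZMod l) (ZMod l) (LaurentPolynomial ℂ) |
        ∃ r m : ℤ, Y = laurentGen l r m} : Set _) := by
  have h1 : Set.range (thetaA l) = Set.range (Finsupp.linearCombination ℂ (vGen l)) := by
    ext Y
    constructor
    · rintro ⟨x, rfl⟩; exact ⟨x.2, (thetaA_eq l x).symm⟩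
    · rintro ⟨f, rfl⟩; exact ⟨((0 : ℂ), f), (thetaA_eq l ((0 : ℂ), f)).symm⟩
  rw [h1, ← LinearMap.coe_range, Finsupp.range_linearCombination]
  refine congrArg _ (Submodule.span_eq_span ?_ ?_)
  · rintro _ ⟨p, rfl⟩
    exact Submodule.subset_span ⟨(p.1.val : ℤ), p.2, rfl⟩
  · rintro Y ⟨r, m, rfl⟩
    exact Submodule.subset_span ⟨((r : ZMod (2 * l)), m), vGen_cast l r m⟩

end Theta
section Indep
variable (l : ℕ) [NeZero l]

lemma laurentGen_apply (r m : ℤ) (i j : ZMod l) :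
    laurentGen l r m i j = AddMonoidAlgebra.single m (amat l r m i j) := by
  show (LaurentPolynomial.T m • ((amat l r m).map (algebraMap ℂ (LaurentPolynomial ℂ)))) i j = _
  rw [Matrix.smul_apply, Matrix.map_apply, smul_eq_mul, mul_comm]
  rw [show algebraMap ℂ (LaurentPolynomial ℂ) (amat l r m i j)
      = LaurentPolynomial.C (amat l r m i j) from rfl]
  rw [← LaurentPolynomial.single_eq_C_mul_T]

lemma laurentGen_coeff (r m m₀ : ℤ) (i j : ZMod l) :
    (laurentGen l r m i j).coeff m₀ = if m = m₀ then amat l r m i j else 0 := by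
  rw [laurentGen_apply, AddMonoidAlgebra.coeff_single, Finsupp.single_apply]

/-- The family `t^m a_{β.val, m}` indexed over `ZMod l × ℤ`. -/
noncomputable def wGen : (ZMod l × ℤ) → Matrix (ZMod l) (ZMod l) (LaurentPolynomial ℂ) :=
  fun q => laurentGen l (q.1.val : ℤ) q.2

lemma wGen_indep (g : (ZMod l × ℤ) →₀ ℂ)
    (hg : Finsupp.linearCombination ℂ (wGen l) g = 0) : g = 0 := by
  ext q0
  obtain ⟨β₀, m₀⟩ := q0
  rw [Finsupp.linearCombination_apply, Finsupp.sum] at hg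
  -- Row equations
  have hrow : ∀ i : ZMod l,
      ∑ β : ZMod l, (g (β, m₀) * omegaL l ^ ((β.val : ℤ) * m₀))
        * (zetaL l ^ (i.val + 1)) ^ β.val = 0 := by
    intro i
    have hentry : (∑ q ∈ g.support, g q • wGen l q) i (i + (m₀ : ZMod l)) = 0 := by
      rw [hg]; rfl
    rw [Matrix.sum_apply] at hentry
    have hco : ((∑ q ∈ g.support,
        ((g q • wGen l q) i (i + (m₀ : ZMod l))))).coeff m₀ = 0 := by rw [hentry]; rfl
    rw [AddMonoidAlgebra.coeff_sum, Finsupp.finset_sum_apply] at hco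
    -- identify each coefficient
    have hterm : ∀ q : ZMod l × ℤ,
        ((g q • wGen l q) i (i + (m₀ : ZMod l))).coeff m₀
          = if q.2 = m₀ then
              (g q * omegaL l ^ ((q.1.val : ℤ) * m₀)) * (zetaL l ^ (i.val + 1)) ^ q.1.val
            else 0 := by
      intro q
      rw [Matrix.smul_apply, AddMonoidAlgebra.coeff_smul_apply, wGen, laurentGen_coeff]
      by_cases h2 : q.2 = m₀
      · subst h2
        rw [if_pos rfl, if_pos rfl, amat_apply, if_pos rfl, smul_eq_mul]
        have hz : zetaL l ^ ((q.1.val : ℤ) * ((i.val : ℤ) + 1))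
            = (zetaL l ^ (i.val + 1)) ^ q.1.val := by
          rw [show ((q.1.val : ℤ) * ((i.val : ℤ) + 1)) = (((i.val + 1) * q.1.val : ℕ) : ℤ) by
            push_cast; ring, zpow_natCast, pow_mul]
        rw [hz]
        ring
      · rw [if_neg h2, if_neg h2, smul_zero]
    have hTmem : ∀ q : ZMod l × ℤ, q.2 = m₀ →
        q ∈ Finset.univ.image (fun β : ZMod l => (β, m₀)) := by
      intro q hq
      refine Finset.mem_image.mpr ⟨q.1, Finset.mem_univ _, ?_⟩
      exact Prod.ext rfl hq.symm
    calc ∑ β : ZMod l, (g (β, m₀) * omegaL l ^ ((β.val : ℤ) * m₀))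
            * (zetaL l ^ (i.val + 1)) ^ β.val
        = ∑ q ∈ Finset.univ.image (fun β : ZMod l => (β, m₀)),
            ((g q • wGen l q) i (i + (m₀ : ZMod l))).coeff m₀ := by
          rw [Finset.sum_image (fun a _ b _ h => (Prod.mk.injEq _ _ _ _ ▸ h).1)]
          refine Finset.sum_congr rfl fun β _ => ?_
          rw [hterm (β, m₀), if_pos rfl]
      _ = ∑ q ∈ g.support ∪ Finset.univ.image (fun β : ZMod l => (β, m₀)),
            ((g q • wGen l q) i (i + (m₀ : ZMod l))).coeff m₀ := by
          apply Finset.sum_subset Finset.subset_union_right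
          intro q _ hq
          rw [hterm q, if_neg]
          intro h2
          exact hq (hTmem q h2)
      _ = ∑ q ∈ g.support, ((g q • wGen l q) i (i + (m₀ : ZMod l))).coeff m₀ := by
          symm
          apply Finset.sum_subset Finset.subset_union_left
          intro q _ hq
          rw [Finsupp.notMem_support_iff.mp hq, zero_smul]
          rfl
      _ = 0 := hco
  -- Vandermonde / polynomial argument
  set c : ZMod l → ℂ := fun β => g (β, m₀) * omegaL l ^ ((β.val : ℤ) * m₀) with hc
  set p : Polynomial ℂ := ∑ β : ZMod l, Polynomial.C (c β) * Polynomial.X ^ (β.val) with hp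
  have hinj : Function.Injective (fun i : ZMod l => zetaL l ^ (i.val + 1)) := by
    intro a b hab
    simp only [pow_succ] at hab
    have h1 : zetaL l ^ a.val = zetaL l ^ b.val :=
      mul_right_cancel₀ (zetaL_ne_zero l) hab
    exact ZMod.val_injective l ((isPrimitiveRoot_zetaL l).pow_inj (ZMod.val_lt a) (ZMod.val_lt b) h1)
  have hdeg : p.natDegree < Fintype.card (ZMod l) := by
    rw [ZMod.card]
    have hb : p.natDegree ≤ l - 1 := by
      apply Polynomial.natDegree_sum_le_of_forall_le
      intro β _
      refine le_trans (Polynomial.natDegree_C_mul_X_pow_le _ _) ?_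
      have := ZMod.val_lt β
      omega
    have : 0 < l := Nat.pos_of_ne_zero (NeZero.ne l)
    omega
  have heval : ∀ i : ZMod l, p.eval (zetaL l ^ (i.val + 1)) = 0 := by
    intro i
    rw [hp, Polynomial.eval_finset_sum]
    simp only [Polynomial.eval_mul, Polynomial.eval_C, Polynomial.eval_pow, Polynomial.eval_X]
    exact hrow i
  have hzero : p = 0 :=
    Polynomial.eq_zero_of_natDegree_lt_card_of_eval_eq_zero p hinj heval hdeg
  have hcoeff : c β₀ = 0 := by
    have h1 : p.coeff β₀.val = c β₀ := by
      rw [hp, Polynomial.finset_sum_coeff]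
      rw [Finset.sum_eq_single β₀]
      · rw [Polynomial.coeff_C_mul, Polynomial.coeff_X_pow, if_pos rfl, mul_one]
      · intro b _ hb
        rw [Polynomial.coeff_C_mul, Polynomial.coeff_X_pow, if_neg, mul_zero]
        exact fun h => hb (ZMod.val_injective l h.symm)
      · intro h
        exact absurd (Finset.mem_univ β₀) h
    rw [← h1, hzero, Polynomial.coeff_zero]
  have := mul_eq_zero.mp hcoeff
  rcases this with h | h
  · simpa using h
  · exact absurd h (zpow_ne_zero _ (omegaL_ne_zero l))
end Indep
section KernelLemmas
variable (l : ℕ) [NeZero l]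

lemma val_l_cast : ((l : ℕ) : ZMod (2 * l)).val = l := by
  rw [ZMod.val_natCast]
  exact Nat.mod_eq_of_lt (by have := NeZero.ne l; omega)

lemma val_add_l {α : ZMod (2 * l)} (h : α.val < l) :
    (α + (l : ZMod (2 * l))).val = α.val + l := by
  rw [ZMod.val_add, val_l_cast]
  exact Nat.mod_eq_of_lt (by omega)

lemma ne_add_l {α : ZMod (2 * l)} (h : α.val < l) : α ≠ α + l := by
  intro he
  have h2 := val_add_l l h
  rw [← he] at h2
  have := NeZero.ne l
  omega

lemma val_sub_l {α : ZMod (2 * l)} (h : l ≤ α.val) :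
    (α - (l : ZMod (2 * l))).val = α.val - l := by
  have hval : ((α.val - l : ℕ) : ZMod (2 * l)) = α - l := by
    rw [Nat.cast_sub h, ZMod.natCast_val, ZMod.cast_id]
  rw [← hval, ZMod.val_natCast]
  exact Nat.mod_eq_of_lt (by have := ZMod.val_lt α; omega)

lemma preimage_pair {α γ : ZMod (2 * l)} (hα : α.val < l)
    (h : ((γ.val : ℕ) : ZMod l) = ((α.val : ℕ) : ZMod l)) : γ = α ∨ γ = α + l := by
  rw [ZMod.natCast_eq_natCast_iff'] at h
  have hav : α.val % l = α.val := Nat.mod_eq_of_lt hα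
  have hg2 : γ.val < 2 * l := ZMod.val_lt γ
  by_cases hg : γ.val < l
  · left
    apply ZMod.val_injective
    rw [← Nat.mod_eq_of_lt hg, h, hav]
  · right
    apply ZMod.val_injective
    rw [val_add_l l hα]
    push_neg at hg
    have h1 : γ.val % l = γ.val - l := by
      rw [Nat.mod_eq_sub_mod hg, Nat.mod_eq_of_lt (by omega)]
    omega

/-- Folding map on basis elements. -/
noncomputable def uGen : (ZMod (2 * l) × ℤ) → ((ZMod l × ℤ) →₀ ℂ) :=
  fun p => (if p.1.val < l then (1:ℂ) else (-1:ℂ) ^ p.2) •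
    Finsupp.single (((p.1.val : ℕ) : ZMod l), p.2) (1:ℂ)

lemma W_u (p : ZMod (2 * l) × ℤ) :
    Finsupp.linearCombination ℂ (wGen l) (uGen l p) = vGen l p := by
  rw [uGen, _root_.map_smul, Finsupp.linearCombination_single, one_smul]
  by_cases h : p.1.val < l
  · rw [if_pos h, one_smul]
    show laurentGen l ((((p.1.val : ℕ) : ZMod l)).val : ℤ) p.2 = laurentGen l (p.1.val : ℤ) p.2
    rw [ZMod.val_natCast, Nat.mod_eq_of_lt h]
  · rw [if_neg h]
    push_neg at h
    show ((-1:ℂ) ^ p.2) • laurentGen l ((((p.1.val : ℕ) : ZMod l)).val : ℤ) p.2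
        = laurentGen l (p.1.val : ℤ) p.2
    have h1 : ((((p.1.val : ℕ) : ZMod l)).val : ℤ) = (p.1.val : ℤ) - l := by
      rw [ZMod.val_natCast]
      have h2 : p.1.val % l = p.1.val - l := by
        rw [Nat.mod_eq_sub_mod h, Nat.mod_eq_of_lt (by have := ZMod.val_lt p.1; omega)]
      rw [h2, Nat.cast_sub h]
    rw [h1, ← laurentGen_add_l]
    congr 1
    ring

lemma W_Psi (f : (ZMod (2 * l) × ℤ) →₀ ℂ) :
    Finsupp.linearCombination ℂ (wGen l) (Finsupp.linearCombination ℂ (uGen l) f)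
      = Finsupp.linearCombination ℂ (vGen l) f := by
  induction f using Finsupp.induction_linear with
  | zero => simp
  | add a b ha hb => rw [map_add, map_add, map_add, ha, hb]
  | single p c =>
    rw [Finsupp.linearCombination_single, _root_.map_smul, W_u, Finsupp.linearCombination_single]

lemma ker_rel (f : (ZMod (2 * l) × ℤ) →₀ ℂ)
    (hker : Finsupp.linearCombination ℂ (vGen l) f = 0)
    {α : ZMod (2 * l)} (hα : α.val < l) (m : ℤ) :
    f (α, m) + (-1:ℂ) ^ m * f (α + l, m) = 0 := by
  have hPsi : Finsupp.linearCombination ℂ (uGen l) f = 0 :=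
    wGen_indep l _ (by rw [W_Psi l f, hker])
  set β : ZMod l := ((α.val : ℕ) : ZMod l) with hβ
  have happ : (Finsupp.linearCombination ℂ (uGen l) f) (β, m) = 0 := by rw [hPsi]; rfl
  rw [Finsupp.linearCombination_apply, Finsupp.sum, Finsupp.finset_sum_apply] at happ
  have hterm : ∀ p : ZMod (2 * l) × ℤ,
      (f p • uGen l p) (β, m)
        = f p * ((if p.1.val < l then (1:ℂ) else (-1:ℂ) ^ p.2)
            * (if ((((p.1.val : ℕ) : ZMod l), p.2) = (β, m)) then 1 else 0)) := by
    intro p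
    rw [Finsupp.smul_apply, uGen, Finsupp.smul_apply, Finsupp.single_apply, smul_eq_mul,
      smul_eq_mul]
  have hpairne : ((α, m) : ZMod (2 * l) × ℤ) ≠ (α + l, m) := by
    intro hc
    exact (ne_add_l l hα) (congrArg Prod.fst hc)
  have hsum : ∑ p ∈ f.support, (f p • uGen l p) (β, m)
      = ∑ p ∈ ({(α, m), (α + l, m)} : Finset (ZMod (2 * l) × ℤ)), (f p • uGen l p) (β, m) := by
    have h1 : ∑ p ∈ f.support ∪ ({(α, m), (α + l, m)} : Finset (ZMod (2 * l) × ℤ)),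
        (f p • uGen l p) (β, m) = ∑ p ∈ f.support, (f p • uGen l p) (β, m) := by
      symm
      apply Finset.sum_subset Finset.subset_union_left
      intro q _ hq
      rw [Finsupp.notMem_support_iff.mp hq, zero_smul, Finsupp.zero_apply]
    have h2 : ∑ p ∈ f.support ∪ ({(α, m), (α + l, m)} : Finset (ZMod (2 * l) × ℤ)),
        (f p • uGen l p) (β, m)
        = ∑ p ∈ ({(α, m), (α + l, m)} : Finset (ZMod (2 * l) × ℤ)), (f p • uGen l p) (β, m) := by
      symm
      apply Finset.sum_subset Finset.subset_union_right
      intro q _ hq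
      rw [hterm q]
      rcases eq_or_ne q.2 m with h2' | h2'
      · rcases eq_or_ne (((q.1.val : ℕ) : ZMod l)) β with h3 | h3
        · exfalso
          rw [hβ] at h3
          rcases preimage_pair l hα h3 with h4 | h4
          · exact hq (by simp [Finset.mem_insert, Prod.ext_iff, h4, h2'])
          · exact hq (by simp [Finset.mem_insert, Finset.mem_singleton, Prod.ext_iff, h4, h2'])
        · rw [if_neg (show ¬(((((q.1.val : ℕ) : ZMod l), q.2) : ZMod l × ℤ) = (β, m)) from
              fun hc => h3 (congrArg Prod.fst hc)), mul_zero, mul_zero]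
      · rw [if_neg (show ¬(((((q.1.val : ℕ) : ZMod l), q.2) : ZMod l × ℤ) = (β, m)) from
              fun hc => h2' (congrArg Prod.snd hc)), mul_zero, mul_zero]
    rw [← h1, h2]
  rw [hsum, Finset.sum_pair hpairne, hterm, hterm] at happ
  dsimp only at happ
  have e1 : ((((α.val : ℕ) : ZMod l), m) : ZMod l × ℤ) = (β, m) := rfl
  have e2 : (((((α + (l : ZMod (2 * l))).val : ℕ) : ZMod l), m) : ZMod l × ℤ) = (β, m) := by
    refine Prod.ext ?_ rfl
    show ((((α + (l : ZMod (2 * l))).val : ℕ) : ZMod l)) = β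
    rw [val_add_l l hα, hβ]
    push_cast [ZMod.natCast_self]
    ring
  rw [if_pos hα, if_pos e1, if_pos e2,
    if_neg (show ¬((α + (l : ZMod (2 * l))).val < l) by rw [val_add_l l hα]; omega)] at happ
  calc f (α, m) + (-1:ℂ) ^ m * f (α + l, m)
      = f (α, m) * (1 * 1) + f (α + l, m) * ((-1:ℂ) ^ m * 1) := by ring
    _ = 0 := happ

end KernelLemmas
section KernelMain
variable (l : ℕ) [NeZero l]

lemma theta_gen_elem (r m : ℤ) :
    thetaA l (Agen (((r + l : ℤ)) : ZMod (2 * l)) m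
      - ((-1:ℂ) ^ m) • Agen ((r : ZMod (2 * l))) m) = 0 := by
  rw [thetaA_eq]
  have hsnd : (Agen (((r + l : ℤ)) : ZMod (2 * l)) m
        - ((-1:ℂ) ^ m) • Agen ((r : ZMod (2 * l))) m).2
      = Finsupp.single ((((r + l : ℤ)) : ZMod (2 * l)), m) 1
        - ((-1:ℂ) ^ m) • Finsupp.single (((r : ZMod (2 * l))), m) 1 := rfl
  rw [hsnd, map_sub, _root_.map_smul, Finsupp.linearCombination_single,
    Finsupp.linearCombination_single, one_smul, one_smul, vGen_cast, vGen_cast,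
    laurentGen_add_l, sub_self]

lemma theta_ker :
    {x : TrigA (ZMod (2 * l)) | thetaA l x = 0} =
      (Submodule.span ℂ ({Acen (ZMod (2 * l))} ∪
        {x : TrigA (ZMod (2 * l)) | ∃ r m : ℤ,
          x = Agen (((r + l : ℤ) : ZMod (2 * l))) m
            - ((-1 : ℂ) ^ m) • Agen ((r : ZMod (2 * l))) m}) : Set _) := by
  apply Set.Subset.antisymm
  · -- kernel ⊆ span
    intro x hx
    have hker : Finsupp.linearCombination ℂ (vGen l) x.2 = 0 := by
      rw [← thetaA_eq]; exact hx
    set f := x.2 with hf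
    set S := f.support.filter (fun p : ZMod (2 * l) × ℤ => l ≤ p.1.val) with hS
    have hterm : ∀ (p : ZMod (2 * l) × ℤ) (γ : ZMod (2 * l)) (m : ℤ),
        (f p • ((Finsupp.single ((p.1, p.2) : ZMod (2 * l) × ℤ) (1:ℂ)
            - ((-1:ℂ) ^ p.2) • Finsupp.single ((p.1 - l, p.2) : ZMod (2 * l) × ℤ) 1)
              : (ZMod (2 * l) × ℤ) →₀ ℂ)) (γ, m)
          = f p * ((if ((p.1, p.2) : ZMod (2 * l) × ℤ) = (γ, m) then (1:ℂ) else 0)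
              - (-1:ℂ) ^ p.2 * (if ((p.1 - l, p.2) : ZMod (2 * l) × ℤ) = (γ, m) then 1 else 0)) := by
      intro p γ m
      rw [Finsupp.smul_apply, Finsupp.sub_apply, Finsupp.smul_apply, Finsupp.single_apply,
        Finsupp.single_apply, smul_eq_mul, smul_eq_mul]
    have hdecomp : x = x.1 • Acen (ZMod (2 * l)) +
        ∑ p ∈ S, f p • (Agen p.1 p.2 - ((-1:ℂ) ^ p.2) • Agen (p.1 - l) p.2) := by
      refine Prod.ext ?_ ?_
      · simp [Acen, Agen, Prod.fst_sum]
      · have h0 : (x.1 • Acen (ZMod (2 * l))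
            + ∑ p ∈ S, f p • (Agen p.1 p.2 - ((-1:ℂ) ^ p.2) • Agen (p.1 - l) p.2)).2
            = ∑ p ∈ S, f p • (Finsupp.single ((p.1, p.2) : ZMod (2 * l) × ℤ) (1:ℂ)
                - ((-1:ℂ) ^ p.2) • Finsupp.single ((p.1 - l, p.2) : ZMod (2 * l) × ℤ) 1) := by
          have h1 : (x.1 • Acen (ZMod (2 * l))).2 = 0 := by simp [Acen]
          rw [show (x.1 • Acen (ZMod (2 * l))
              + ∑ p ∈ S, f p • (Agen p.1 p.2 - ((-1:ℂ) ^ p.2) • Agen (p.1 - l) p.2)).2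
            = (x.1 • Acen (ZMod (2 * l))).2
              + (∑ p ∈ S, f p • (Agen p.1 p.2 - ((-1:ℂ) ^ p.2) • Agen (p.1 - l) p.2)).2 from rfl,
            h1, zero_add, Prod.snd_sum]
          exact Finset.sum_congr rfl fun p _ => rfl
        rw [h0]
        ext q
        obtain ⟨γ, m⟩ := q
        rw [Finsupp.finset_sum_apply]
        show f (γ, m) = _
        by_cases hγ : l ≤ γ.val
        · rw [Finset.sum_eq_single ((γ, m) : ZMod (2 * l) × ℤ)]
          · rw [hterm, if_pos rfl, if_neg, mul_zero, sub_zero, mul_one]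
            intro hc
            have : γ - (l : ZMod (2 * l)) = γ := congrArg Prod.fst hc
            have hv := val_sub_l l hγ
            rw [this] at hv
            have := NeZero.ne l
            omega
          · intro b hb hbne
            rw [hterm]
            have hbS := Finset.mem_filter.mp hb
            rw [if_neg, if_neg, mul_zero, sub_zero, mul_zero]
            · intro hc
              have h1 : b.1 - (l : ZMod (2 * l)) = γ := congrArg Prod.fst hc
              have hv := val_sub_l l hbS.2
              rw [h1] at hv
              have := ZMod.val_lt b.1
              omega
            · intro hc
              exact hbne (by rw [← hc])
          · intro hnot
            have : (γ, m) ∉ f.support := by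
              intro hmem
              exact hnot (Finset.mem_filter.mpr ⟨hmem, hγ⟩)
            rw [Finsupp.notMem_support_iff.mp this, zero_smul, Finsupp.zero_apply]
        · push_neg at hγ
          rw [Finset.sum_eq_single ((γ + l, m) : ZMod (2 * l) × ℤ)]
          · rw [hterm]
            have hne1 : ¬(((γ + (l : ZMod (2 * l)), m) : ZMod (2 * l) × ℤ) = (γ, m)) := by
              intro hc
              exact (ne_add_l l hγ) (congrArg Prod.fst hc).symm
            rw [if_neg hne1, if_pos (by rw [add_sub_cancel_right]), mul_one]
            have hrel := ker_rel l f hker hγ m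
            linear_combination hrel
          · intro b hb hbne
            rw [hterm]
            have hbS := Finset.mem_filter.mp hb
            rw [if_neg, if_neg, mul_zero, sub_zero, mul_zero]
            · intro hc
              have h1 : b.1 - (l : ZMod (2 * l)) = γ := congrArg Prod.fst hc
              have h2 : b.2 = m := congrArg Prod.snd hc
              apply hbne
              have : b.1 = γ + l := by rw [← h1]; ring
              calc b = (b.1, b.2) := rfl
                _ = (γ + l, m) := by rw [this, h2]
            · intro hc
              have h1 : b.1 = γ := congrArg Prod.fst hc
              rw [h1] at hbS
              omega
          · intro hnot
            have hhigh : l ≤ ((γ + (l : ZMod (2 * l))), m).1.val := by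
              rw [val_add_l l hγ]; omega
            have : ((γ + (l : ZMod (2 * l))), m) ∉ f.support := by
              intro hmem
              exact hnot (Finset.mem_filter.mpr ⟨hmem, hhigh⟩)
            rw [Finsupp.notMem_support_iff.mp this, zero_smul, Finsupp.zero_apply]
    rw [hdecomp]
    refine Submodule.add_mem _
      (Submodule.smul_mem _ _ (Submodule.subset_span (Or.inl rfl))) ?_
    refine Submodule.sum_mem _ fun p hp => Submodule.smul_mem _ _
      (Submodule.subset_span (Or.inr ?_))
    refine ⟨(p.1.val : ℤ) - l, p.2, ?_⟩
    have hple := (Finset.mem_filter.mp hp).2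
    have h1 : (((p.1.val : ℤ) - l + l : ℤ) : ZMod (2 * l)) = p.1 := by
      push_cast [ZMod.natCast_val, ZMod.cast_id]
      ring
    have h2 : ((((p.1.val : ℤ) - l) : ℤ) : ZMod (2 * l)) = p.1 - l := by
      push_cast [ZMod.natCast_val, ZMod.cast_id]
      ring
    rw [h1, h2]
  · -- span ⊆ kernel
    rw [show {x : TrigA (ZMod (2 * l)) | thetaA l x = 0}
        = (LinearMap.ker ((Finsupp.linearCombination ℂ (vGen l)).comp
            (LinearMap.snd ℂ ℂ ((ZMod (2 * l) × ℤ) →₀ ℂ))) : Set _) from by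
      ext x
      simp only [Set.mem_setOf_eq, SetLike.mem_coe, LinearMap.mem_ker, LinearMap.comp_apply,
        LinearMap.snd_apply]
      rw [thetaA_eq]]
    apply Submodule.span_le.mpr
    rintro y (rfl | ⟨r, m, rfl⟩)
    · show Finsupp.linearCombination ℂ (vGen l) (Acen (ZMod (2 * l))).2 = 0
      rw [show (Acen (ZMod (2 * l))).2 = 0 from rfl, map_zero]
    · show Finsupp.linearCombination ℂ (vGen l)
          ((Agen (((r + l : ℤ)) : ZMod (2 * l)) m
            - ((-1:ℂ) ^ m) • Agen ((r : ZMod (2 * l))) m).2) = 0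
      rw [← thetaA_eq]
      exact theta_gen_elem l r m

end KernelMain
theorem stmt13 (l : ℕ) [NeZero l] :
    -- well-definedness: `a_{r+2l,m} = a_{r,m}`
    (∀ r m : ℤ, amat l (r + 2 * l) m = amat l r m) ∧
    -- `θ_A` is ℂ-linear, kills the central element, and sends `A_{[r],m}` to `t^m a_{r,m}`
    (∀ x y : TrigA (ZMod (2 * l)), thetaA l (x + y) = thetaA l x + thetaA l y) ∧
    (∀ (c : ℂ) (x : TrigA (ZMod (2 * l))), thetaA l (c • x) = c • thetaA l x) ∧
    thetaA l (Acen (ZMod (2 * l))) = 0 ∧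
    (∀ r m : ℤ, thetaA l (Agen ((r : ZMod (2 * l))) m) = laurentGen l r m) ∧
    -- `θ_A` is a homomorphism of complex Lie algebras (commutator bracket on matrices)
    (∀ x y : TrigA (ZMod (2 * l)),
      thetaA l (Abrk (chiTwoL l) x y) = thetaA l x * thetaA l y - thetaA l y * thetaA l x) ∧
    -- its range is the span of the `t^m a_{r,m}` ...
    Set.range (thetaA l) =
      (Submodule.span ℂ {Y : Matrix (ZMod l) (ZMod l) (LaurentPolynomial ℂ) |
        ∃ r m : ℤ, Y = laurentGen l r m} : Set _) ∧
    -- ... and its kernel is spanned by `c` and the elements `A_{[r+l],m} − (−1)^m A_{[r],m}`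
    {x : TrigA (ZMod (2 * l)) | thetaA l x = 0} =
      (Submodule.span ℂ ({Acen (ZMod (2 * l))} ∪
        {x : TrigA (ZMod (2 * l)) | ∃ r m : ℤ,
          x = Agen (((r + l : ℤ) : ZMod (2 * l))) m
            - ((-1 : ℂ) ^ m) • Agen ((r : ZMod (2 * l))) m}) : Set _) := by
  refine ⟨?_, ?_, ?_, ?_, ?_, ?_, ?_, ?_⟩
  · intro r m
    exact amat_congr l ⟨1, by push_cast; ring⟩ m
  · intro x y
    rw [thetaA_eq, thetaA_eq, thetaA_eq, show (x + y).2 = x.2 + y.2 from rfl, map_add]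
  · intro c x
    rw [thetaA_eq, thetaA_eq, show (c • x).2 = c • x.2 from rfl, _root_.map_smul]
  · rw [thetaA_eq, show (Acen (ZMod (2 * l))).2 = 0 from rfl, map_zero]
  · exact thetaA_Agen l
  · exact theta_hom l
  · exact theta_range l
  · exact theta_ker l
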